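/- Let r be a real number and let (p_m, q_m)_{m≥1} be integers with p_m ≥ 2, q_m ≥ 1, satisfying 0 < |r·p_m − q_m| < p_m^{−m} for all m ≥ 1 and p_m^{−m} < |r·p_{m−1} − q_{m−1}| for all m ≥ 2, and set λ_m := r·p_m − q_m. Define x₃(t) := ∑_{m=1}^∞ (m/(2π·p_m^m·λ_m))·sin(2π·λ_m·t). Then the function t ↦ x₃(t) is unbounded on [0, ∞): sup_{t≥0} |x₃(t)| = +∞. -/

import Mathlib

open Real

open Real MeasureTheory

lemma stmt17_integral_sin_mul (c T : ℝ) (hc : c ≠ 0) :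
    ∫ t in (0:ℝ)..T, Real.sin (c * t) = (1 - Real.cos (c * T)) / c := by
  rw [intervalIntegral.integral_comp_mul_left (fun x => Real.sin x) hc]
  simp [integral_sin]
  field_simp

/-- With the full approximation scheme, `λ_m = r p_m − q_m` and
`x₃(t) = ∑_{m≥1} (m/(2π p_m^m λ_m)) sin(2π λ_m t)`, the function `x₃` is unbounded on
`[0, ∞)`: `sup_{t≥0} |x₃(t)| = +∞`, i.e. for every `C` there is `t ≥ 0` with `C < |x₃(t)|`. -/
theorem stmt17 (r : ℝ) (p q : ℕ → ℤ)
    (hp : ∀ m : ℕ, 1 ≤ m → 2 ≤ p m) (hq : ∀ m : ℕ, 1 ≤ m → 1 ≤ q m)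
    (happrox : ∀ m : ℕ, 1 ≤ m →
      0 < |r * (p m : ℝ) - (q m : ℝ)| ∧
      |r * (p m : ℝ) - (q m : ℝ)| < (((p m : ℝ)) ^ m)⁻¹)
    (hdec : ∀ m : ℕ, 2 ≤ m →
      (((p m : ℝ)) ^ m)⁻¹ < |r * (p (m - 1) : ℝ) - (q (m - 1) : ℝ)|)
    (x₃ : ℝ → ℝ)
    (hx₃ : ∀ t : ℝ, x₃ t =
      ∑' m : ℕ, (m : ℝ) / (2 * π * ((p m : ℝ)) ^ m * (r * (p m : ℝ) - (q m : ℝ))) *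
        Real.sin (2 * π * (r * (p m : ℝ) - (q m : ℝ)) * t)) :
    ∀ C : ℝ, ∃ t : ℝ, 0 ≤ t ∧ C < |x₃ t| := by
  intro C
  by_contra hcontra
  push_neg at hcontra
  have hπ : 0 < π := Real.pi_pos
  set lam : ℕ → ℝ := fun m => r * (p m : ℝ) - (q m : ℝ) with hlamdef
  set F : ℕ → ℝ → ℝ :=
    fun m t => (m : ℝ) / (2 * π * ((p m : ℝ)) ^ m * lam m) * Real.sin (2 * π * lam m * t)
    with hFdef
  -- basic facts
  have hp2 : ∀ m : ℕ, 1 ≤ m → (2:ℝ) ≤ ((p m : ℝ)) := by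
    intro m hm; exact_mod_cast hp m hm
  have hpowpos : ∀ m : ℕ, 1 ≤ m → (0:ℝ) < ((p m : ℝ)) ^ m := by
    intro m hm; exact pow_pos (by linarith [hp2 m hm]) m
  have hpow2 : ∀ m : ℕ, 1 ≤ m → (2:ℝ) ^ m ≤ ((p m : ℝ)) ^ m := by
    intro m hm; exact pow_le_pow_left₀ (by norm_num) (hp2 m hm) m
  have hlamne : ∀ m : ℕ, 1 ≤ m → lam m ≠ 0 := by
    intro m hm h0
    have h := (happrox m hm).1
    have h0' : r * (p m : ℝ) - (q m : ℝ) = 0 := h0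
    rw [h0'] at h
    simp at h
  -- pointwise bound
  have hFb : ∀ (m : ℕ) (t : ℝ), |F m t| ≤ ((m : ℝ) * (2⁻¹) ^ m) * |t| := by
    intro m t
    rcases Nat.eq_zero_or_pos m with hm | hm
    · simp [hFdef, hm]
    · have h1 : 1 ≤ m := hm
      have hpp := hpowpos m h1
      have hl : 0 < |lam m| := (happrox m h1).1
      have key : |F m t| ≤ ((m : ℝ) / (2 * π * ((p m : ℝ)) ^ m * |lam m|)) *
          (2 * π * |lam m| * |t|) := by
        rw [hFdef, abs_mul]
        apply mul_le_mul
        · rw [abs_div]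
          apply le_of_eq
          congr 1
          · exact abs_of_nonneg (by positivity)
          · rw [abs_mul]
            congr 1
            exact abs_of_nonneg (by positivity)
        · calc |Real.sin (2 * π * lam m * t)| ≤ |2 * π * lam m * t| := Real.abs_sin_le_abs
            _ = 2 * π * |lam m| * |t| := by
                rw [abs_mul, abs_mul]
                congr 2
                exact abs_of_nonneg (by positivity)
        · positivity
        · positivity
      have keq : ((m : ℝ) / (2 * π * ((p m : ℝ)) ^ m * |lam m|)) *
          (2 * π * |lam m| * |t|) = (m : ℝ) * |t| / ((p m : ℝ)) ^ m := by
        field_simp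
      rw [keq] at key
      refine key.trans ?_
      rw [div_le_iff₀ hpp]
      have h2 : (1:ℝ) ≤ (2⁻¹:ℝ) ^ m * ((p m : ℝ)) ^ m := by
        have : ((2:ℝ)⁻¹) ^ m * (2:ℝ) ^ m = 1 := by
          rw [← mul_pow]; norm_num
        calc (1:ℝ) = (2⁻¹:ℝ) ^ m * (2:ℝ) ^ m := this.symm
          _ ≤ (2⁻¹:ℝ) ^ m * ((p m : ℝ)) ^ m := by
              apply mul_le_mul_of_nonneg_left (hpow2 m h1) (by positivity)
      calc (m : ℝ) * |t| = (m : ℝ) * |t| * 1 := by ring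
        _ ≤ (m : ℝ) * |t| * ((2⁻¹:ℝ) ^ m * ((p m : ℝ)) ^ m) := by
            apply mul_le_mul_of_nonneg_left h2 (by positivity)
        _ = (m : ℝ) * (2⁻¹) ^ m * |t| * ((p m : ℝ)) ^ m := by ring
  -- summability of the bound
  have hbsum : Summable (fun m : ℕ => (m : ℝ) * (2⁻¹) ^ m) := by
    have hn : ‖(2⁻¹:ℝ)‖ < 1 := by
      rw [Real.norm_eq_abs]
      rw [abs_of_pos] <;> norm_num
    have := summable_pow_mul_geometric_of_norm_lt_one (R := ℝ) 1 (r := (2⁻¹:ℝ)) hn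
    simpa [pow_one] using this
  have hsum : ∀ t : ℝ, Summable (fun m => F m t) := by
    intro t
    apply Summable.of_norm_bounded (g := fun m : ℕ => ((m : ℝ) * (2⁻¹) ^ m) * |t|)
      (hbsum.mul_right _)
    intro m
    simpa [Real.norm_eq_abs] using hFb m t
  have hx₃' : ∀ t : ℝ, HasSum (fun m => F m t) (x₃ t) := by
    intro t
    rw [hx₃ t]
    exact (hsum t).hasSum
  -- choose M
  set M : ℕ := ⌈π ^ 2 * (|C| + 1)⌉₊ with hMdef
  have hMR : π ^ 2 * (|C| + 1) ≤ (M : ℝ) := Nat.le_ceil _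
  have hM1 : 1 ≤ M := by
    have : (0:ℝ) < π ^ 2 * (|C| + 1) := by positivity
    exact Nat.one_le_iff_ne_zero.mpr (by
      intro h
      rw [hMdef] at h
      have := Nat.ceil_pos.mpr this
      omega)
  have hMpos : (0:ℝ) < (M : ℝ) := by
    have : (0:ℝ) < π ^ 2 * (|C| + 1) := by positivity
    linarith
  set A : ℝ := ((p M : ℝ)) ^ M with hAdef
  have hA : 0 < A := hpowpos M hM1
  set L : ℝ := |lam M| with hLdef
  have hL : 0 < L := (happrox M hM1).1
  have hALlt : A * L < 1 := by
    have h := (happrox M hM1).2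
    calc A * L < A * A⁻¹ := by
          apply mul_lt_mul_of_pos_left h hA
      _ = 1 := mul_inv_cancel₀ (ne_of_gt hA)
  set T : ℝ := 1 / (2 * L) with hTdef
  have hT : 0 < T := by positivity
  -- integrals of each term
  set J : ℕ → ℝ := fun m => ∫ t in Set.Ioc (0:ℝ) T, F m t with hJdef
  have hJval : ∀ m : ℕ, 1 ≤ m → J m =
      (m : ℝ) * (1 - Real.cos (2 * π * lam m * T)) /
        (4 * π ^ 2 * ((p m : ℝ)) ^ m * (lam m) ^ 2) := by
    intro m hm
    have hc : (2 * π * lam m) ≠ 0 := by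
      have := hlamne m hm
      positivity
    have h1 : J m = ∫ t in (0:ℝ)..T, F m t := by
      rw [hJdef, intervalIntegral.integral_of_le hT.le]
    rw [h1, hFdef]
    rw [intervalIntegral.integral_const_mul]
    rw [stmt17_integral_sin_mul (2 * π * lam m) T hc]
    rw [div_mul_div_comm]
    congr 1
    ring
  have hJnonneg : ∀ m : ℕ, 0 ≤ J m := by
    intro m
    rcases Nat.eq_zero_or_pos m with hm | hm
    · have : (fun t => F m t) = fun _ => (0:ℝ) := by
        funext t; simp [hFdef, hm]
      rw [hJdef]
      simp only [this]
      simp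
    · rw [hJval m hm]
      apply div_nonneg
      · apply mul_nonneg (by positivity)
        have := Real.cos_le_one (2 * π * lam m * T)
        linarith
      · have := hpowpos m hm
        positivity
  -- value of J M
  have hcosM : Real.cos (2 * π * lam M * T) = -1 := by
    have hne := hlamne M hM1
    rcases abs_cases (lam M) with ⟨h, _⟩ | ⟨h, _⟩
    · have hLlam : L = lam M := by rw [hLdef, h]
      have hxx : 2 * π * lam M * T = π := by
        rw [hTdef, hLlam]
        field_simp
        try ring
      rw [hxx, Real.cos_pi]
    · have hLlam : L = -lam M := by rw [hLdef, h]
      have hxx : 2 * π * lam M * T = -π := by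
        rw [hTdef, hLlam]
        field_simp
        try ring
      rw [hxx, Real.cos_neg, Real.cos_pi]
  have hJM : J M = (M : ℝ) * 2 / (4 * π ^ 2 * A * L ^ 2) := by
    rw [hJval M hM1, hcosM, hAdef, hLdef]
    rw [sq_abs]
    norm_num
  -- HasSum of the integrals to the integral of x₃
  have hHS : HasSum J (∫ t in Set.Ioc (0:ℝ) T, x₃ t) := by
    rw [hJdef]
    refine MeasureTheory.hasSum_integral_of_dominated_convergence
      (μ := volume.restrict (Set.Ioc (0:ℝ) T)) (F := F) (f := x₃)
      (fun m (_ : ℝ) => ((m : ℝ) * (2⁻¹) ^ m) * T) ?_ ?_ ?_ ?_ ?_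
    · intro m
      apply Continuous.aestronglyMeasurable
      rw [hFdef]
      fun_prop
    · intro m
      rw [ae_restrict_iff' measurableSet_Ioc]
      apply ae_of_all
      intro t ht
      rw [Real.norm_eq_abs]
      refine (hFb m t).trans ?_
      apply mul_le_mul_of_nonneg_left _ (by positivity)
      rw [abs_of_nonneg ht.1.le]
      exact ht.2
    · apply ae_of_all
      intro t
      exact hbsum.mul_right _
    · apply integrableOn_const (C := ∑' m : ℕ, ((m : ℝ) * (2⁻¹) ^ m) * T) (hs := ?_)
      exact measure_Ioc_lt_top.ne
    · apply ae_of_all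
      intro t
      exact hx₃' t
  -- lower bound for the integral
  have hlow : J M ≤ ∫ t in Set.Ioc (0:ℝ) T, x₃ t :=
    le_hasSum hHS M (fun m _ => hJnonneg m)
  -- upper bound for the integral
  have hC0 : 0 ≤ C := le_trans (abs_nonneg (x₃ 0)) (hcontra 0 le_rfl)
  have hmeas : AEStronglyMeasurable x₃ (volume.restrict (Set.Ioc (0:ℝ) T)) := by
    have hSM : StronglyMeasurable x₃ := by
      refine stronglyMeasurable_of_tendsto (f := fun n t => ∑ m ∈ Finset.range n, F m t)
        (Filter.atTop : Filter ℕ) (fun n => ?_) ?_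
      · apply Continuous.stronglyMeasurable
        apply continuous_finset_sum
        intro m _
        rw [hFdef]
        fun_prop
      · rw [tendsto_pi_nhds]
        intro t
        exact (hx₃' t).tendsto_sum_nat
    exact hSM.aestronglyMeasurable
  have hint : IntegrableOn x₃ (Set.Ioc (0:ℝ) T) volume := by
    apply Integrable.mono' (integrableOn_const (C := C) measure_Ioc_lt_top.ne)
      hmeas
    rw [ae_restrict_iff' measurableSet_Ioc]
    apply ae_of_all
    intro t ht
    rw [Real.norm_eq_abs]
    exact hcontra t ht.1.le
  have hup : (∫ t in Set.Ioc (0:ℝ) T, x₃ t) ≤ C * T := by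
    have h1 : (∫ t in Set.Ioc (0:ℝ) T, x₃ t) ≤ ∫ _ in Set.Ioc (0:ℝ) T, C := by
      apply setIntegral_mono_on hint
        (integrableOn_const (C := C) measure_Ioc_lt_top.ne)
        measurableSet_Ioc
      intro t ht
      exact le_trans (le_abs_self _) (hcontra t ht.1.le)
    refine h1.trans ?_
    rw [setIntegral_const, Real.volume_real_Ioc_of_le (by linarith), smul_eq_mul]
    rw [sub_zero]
    rw [mul_comm]
  -- final contradiction
  have hkey : C * T < J M := by
    have hC1 : |C| + 1 ≤ (M : ℝ) / π ^ 2 := by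
      rw [le_div_iff₀ (by positivity)]
      linarith [hMR]
    have hCM : C < (M : ℝ) / (π ^ 2 * A * L) := by
      have h1 : (M : ℝ) / π ^ 2 ≤ (M : ℝ) / (π ^ 2 * A * L) := by
        apply div_le_div_of_nonneg_left hMpos.le (by positivity)
        calc π ^ 2 * A * L = π ^ 2 * (A * L) := by ring
          _ ≤ π ^ 2 * 1 := by
              apply mul_le_mul_of_nonneg_left hALlt.le (by positivity)
          _ = π ^ 2 := by ring
      calc C ≤ |C| := le_abs_self C
        _ < |C| + 1 := by linarith
        _ ≤ (M : ℝ) / π ^ 2 := hC1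
        _ ≤ (M : ℝ) / (π ^ 2 * A * L) := h1
    have h2 : C * T < ((M : ℝ) / (π ^ 2 * A * L)) * T :=
      mul_lt_mul_of_pos_right hCM hT
    refine h2.trans_eq ?_
    rw [hJM, hTdef]
    field_simp
    ring
  linarith
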